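/- Let X and α be processes on (Ω,𝓕,P) with X measurable ℝ^d-valued and α measurable taking values in a closed convex set C ⊆ ℝ^n, with E[∫_0^t |α_s| ds] < ∞ for all t > 0. Then there exists a jointly Borel measurable function a: ℝ₊ × ℝ^d → C such that for Lebesgue-a.e. t ≥ 0, a(t, X_t) = E[α_t | X_t] almost surely. -/

import Mathlib

open MeasureTheory Set MeasurableSpace
open scoped ENNReal ProbabilityTheory

/-- A countable π-system generating the Borel σ-algebra of `EuclideanSpace ℝ (Fin m)`,
which is countably spanning. -/
lemma exists_countable_piSystem (m : ℕ) :
    ∃ S : Set (Set (EuclideanSpace ℝ (Fin m))), S.Countable ∧ IsPiSystem S ∧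
      IsCountablySpanning S ∧
      MeasurableSpace.generateFrom S = (inferInstance : MeasurableSpace (EuclideanSpace ℝ (Fin m))) := by
  classical
  set T : Set (Set ℝ) := ⋃ q : ℚ, {Iic (q : ℝ)} with hT
  have hTc : T.Countable := countable_iUnion fun q => countable_singleton _
  have hTspan : IsCountablySpanning T := by
    refine ⟨fun k => Iic ((k : ℚ) : ℝ), fun k => mem_iUnion.2 ⟨k, rfl⟩, ?_⟩
    refine eq_univ_of_forall fun x => ?_
    obtain ⟨k, hk⟩ := exists_nat_ge x
    exact mem_iUnion.2 ⟨k, by simpa using hk⟩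
  have hTgen : generateFrom T = (inferInstance : MeasurableSpace ℝ) := by
    rw [BorelSpace.measurable_eq (α := ℝ), Real.borel_eq_generateFrom_Iic_rat]
  set C : Set (Set (Fin m → ℝ)) := pi univ '' pi univ (fun _ => T) with hC
  have hCgen : generateFrom C = (inferInstance : MeasurableSpace (Fin m → ℝ)) :=
    generateFrom_eq_pi (fun _ => hTgen) (fun _ => hTspan)
  have hCpi : IsPiSystem C := IsPiSystem.pi fun _ => Real.isPiSystem_Iic_rat
  have hCspan : IsCountablySpanning C := IsCountablySpanning.pi fun _ => hTspan
  have hCc : C.Countable := by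
    refine Set.Countable.image ?_ _
    have : (pi univ fun _ : Fin m => T) = {f : Fin m → Set ℝ | ∀ i, f i ∈ T} := by
      ext f; simp [Set.mem_pi]
    rw [this]
    exact countable_pi fun _ => hTc
  set e := (MeasurableEquiv.toLp 2 (Fin m → ℝ)).symm with he
  refine ⟨(fun s => e ⁻¹' s) '' C, hCc.image _, ?_, ?_, ?_⟩
  · exact hCpi.comap (e : EuclideanSpace ℝ (Fin m) → (Fin m → ℝ))
  · obtain ⟨s, hs, hsu⟩ := hCspan
    exact ⟨fun k => e ⁻¹' (s k), fun k => mem_image_of_mem _ (hs k),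
      by rw [← preimage_iUnion, hsu, preimage_univ]⟩
  · rw [← MeasurableSpace.comap_generateFrom, hCgen,
      e.measurableEmbedding.comap_eq]

/-- Geometric bound for the weight function. -/
lemma weight_lintegral_lt_top (u : ℝ → ℝ≥0∞)
    (hu : ∀ t, u t ≤ ((2 : ℝ≥0∞) ^ (⌈t⌉₊ + 1))⁻¹) :
    ∫⁻ t in Ici (0 : ℝ), u t ∂volume < ⊤ := by
  have hsub : Ici (0 : ℝ) ⊆ {0} ∪ ⋃ k : ℕ, Ioc (k : ℝ) (k + 1) := by
    intro t ht
    rcases eq_or_lt_of_le (mem_Ici.mp ht) with h | h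
    · exact Or.inl (by simp [← h])
    · refine Or.inr (mem_iUnion.2 ⟨⌈t⌉₊ - 1, ?_, ?_⟩)
      · have h1 : 1 ≤ ⌈t⌉₊ := Nat.one_le_ceil_iff.mpr h
        have h2 : (⌈t⌉₊ : ℝ) < t + 1 := Nat.ceil_lt_add_one ht
        push_cast [Nat.cast_sub h1]
        linarith
      · have h1 : 1 ≤ ⌈t⌉₊ := Nat.one_le_ceil_iff.mpr h
        have h2 := Nat.le_ceil t
        push_cast [Nat.cast_sub h1]
        linarith
  calc ∫⁻ t in Ici (0 : ℝ), u t ∂volume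
      ≤ ∫⁻ t in ({0} ∪ ⋃ k : ℕ, Ioc (k : ℝ) (k + 1)), u t ∂volume :=
        lintegral_mono_set hsub
    _ ≤ (∫⁻ t in ({0} : Set ℝ), u t ∂volume)
        + ∫⁻ t in ⋃ k : ℕ, Ioc (k : ℝ) (k + 1), u t ∂volume := lintegral_union_le _ _ _
    _ ≤ 0 + ∑' k : ℕ, ∫⁻ t in Ioc (k : ℝ) (k + 1), u t ∂volume := by
        gcongr
        · exact le_of_eq (setLIntegral_measure_zero _ _ (by simp))
        · exact lintegral_iUnion_le _ _
    _ ≤ 0 + ∑' k : ℕ, ((2 : ℝ≥0∞)⁻¹) ^ k := by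
        gcongr with k
        calc ∫⁻ t in Ioc (k : ℝ) (k + 1), u t ∂volume
            ≤ ∫⁻ _ in Ioc (k : ℝ) (k + 1), ((2 : ℝ≥0∞)⁻¹) ^ k ∂volume := by
              refine setLIntegral_mono (by fun_prop) fun t ht => ?_
              refine (hu t).trans ?_
              rw [← ENNReal.inv_pow]
              refine ENNReal.inv_le_inv.mpr (pow_le_pow_right₀ one_le_two ?_)
              have : k < ⌈t⌉₊ := Nat.lt_ceil.mpr ht.1
              omega
          _ ≤ ((2 : ℝ≥0∞)⁻¹) ^ k := by
              rw [setLIntegral_const]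
              simp [Real.volume_Ioc]
    _ < ⊤ := by
        rw [zero_add, ENNReal.tsum_geometric, ENNReal.one_sub_inv_two]
        simp

/-- Brunick–Shreve mimicking lemma: if `X` is an `ℝ^d`-valued measurable process and `α`
a measurable process with values in a closed convex set `C ⊆ ℝ^n` satisfying
`E[∫_0^t |α_s| ds] < ∞` for all `t > 0`, then there is a jointly Borel measurable
`a : ℝ₊ × ℝ^d → C` with `a(t, X_t) = E[α_t | X_t]` a.s., for Lebesgue-a.e. `t ≥ 0`. -/
theorem exists_mimicking_function (d n : ℕ)
    {Ω : Type*} [MeasurableSpace Ω] (P : Measure Ω) [IsProbabilityMeasure P]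
    (C : Set (EuclideanSpace ℝ (Fin n))) (hC : IsClosed C) (hconv : Convex ℝ C)
    (X : ℝ → Ω → EuclideanSpace ℝ (Fin d))
    (hX : Measurable fun p : ℝ × Ω => X p.1 p.2)
    (α : ℝ → Ω → EuclideanSpace ℝ (Fin n))
    (hα : Measurable fun p : ℝ × Ω => α p.1 p.2)
    (hαC : ∀ t ω, α t ω ∈ C)
    (hint : ∀ t > (0 : ℝ),
      ∫⁻ ω, ∫⁻ s in Ioc (0 : ℝ) t, ‖α s ω‖₊ ∂volume ∂P < ⊤) :
    ∃ a : ℝ × EuclideanSpace ℝ (Fin d) → EuclideanSpace ℝ (Fin n),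
      Measurable a ∧ (∀ p, a p ∈ C) ∧
      ∀ᵐ t ∂(volume.restrict (Ici (0 : ℝ))),
        (fun ω => a (t, X t ω))
          =ᵐ[P] P[α t | MeasurableSpace.comap (X t) inferInstance] := by
  classical
  have hXt : ∀ t, Measurable (X t) := fun t => hX.comp measurable_prodMk_left
  have hαt : ∀ t, Measurable (α t) := fun t => hα.comp measurable_prodMk_left
  obtain ⟨ω₀, -⟩ := nonempty_of_measure_ne_zero
    (show P univ ≠ 0 by simp)
  set c₀ : EuclideanSpace ℝ (Fin n) := α 0 ω₀ with hc₀def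
  have hc₀ : c₀ ∈ C := hαC 0 ω₀
  -- the total mass function
  set h : ℝ → ℝ≥0∞ := fun t => ∫⁻ ω, ‖α t ω‖₊ ∂P with hhdef
  have hhm : Measurable h :=
    Measurable.lintegral_prod_right' (f := fun p : ℝ × Ω => (‖α p.1 p.2‖₊ : ℝ≥0∞)) hα.nnnorm.coe_nnreal_ennreal
  -- a.e. finiteness of h
  have hfin : ∀ᵐ t ∂(volume.restrict (Ici (0 : ℝ))), h t < ⊤ := by
    have hk : ∀ k : ℕ, ∀ᵐ t ∂(volume.restrict (Ioc (0 : ℝ) (k + 1))), h t < ⊤ := by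
      intro k
      refine ae_lt_top hhm ?_
      have hswap := lintegral_lintegral_swap (μ := P)
        (ν := volume.restrict (Ioc (0 : ℝ) (k + 1)))
        (f := fun ω s => (‖α s ω‖₊ : ℝ≥0∞)) ?_
      · rw [← hswap]
        exact (hint (k + 1) (by positivity)).ne
      · exact (hα.comp measurable_swap).nnnorm.coe_nnreal_ennreal.aemeasurable
    have h0 : ∀ᵐ t ∂(volume : Measure ℝ), t ≠ 0 := by
      refine ae_iff.2 ?_
      simp only [ne_eq, not_not]
      have : {t : ℝ | t = 0} = {0} := by ext; simp
      rw [this]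
      exact Real.volume_singleton
    rw [ae_restrict_iff' measurableSet_Ici]
    have hk' : ∀ᵐ t ∂(volume : Measure ℝ), ∀ k : ℕ, t ∈ Ioc (0:ℝ) (k+1) → h t < ⊤ := by
      rw [ae_all_iff]
      intro k
      have := hk k
      rwa [ae_restrict_iff' measurableSet_Ioc] at this
    filter_upwards [h0, hk'] with t ht0 htk hmem
    have htpos : 0 < t := lt_of_le_of_ne hmem (Ne.symm ht0)
    obtain ⟨k, hkt⟩ := exists_nat_ge t
    exact htk k ⟨htpos, hkt.trans (by linarith)⟩
  -- the weight
  set w : ℝ → ℝ≥0∞ := fun t => ((2 : ℝ≥0∞) ^ (⌈t⌉₊ + 1))⁻¹ * (1 + h t)⁻¹ with hwdef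
  have hwm : Measurable w := by
    refine Measurable.mul ?_ ((measurable_const.add hhm).inv)
    exact (measurable_from_top (f := fun k : ℕ => ((2 : ℝ≥0∞) ^ (k + 1))⁻¹)).comp
      Nat.measurable_ceil
  have hwle : ∀ t, w t ≤ ((2 : ℝ≥0∞) ^ (⌈t⌉₊ + 1))⁻¹ := by
    intro t
    exact le_trans (mul_le_mul_right (ENNReal.inv_le_one.mpr (le_add_right le_rfl)) _)
      (le_of_eq (mul_one _))
  set lam0 : Measure ℝ := volume.restrict (Ici (0 : ℝ)) with hlam0
  set lamw : Measure ℝ := lam0.withDensity w with hlamw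
  haveI hlamwfin : IsFiniteMeasure lamw := by
    constructor
    rw [hlamw, withDensity_apply _ MeasurableSet.univ, Measure.restrict_univ, hlam0]
    exact weight_lintegral_lt_top w hwle
  set Q : Measure (ℝ × Ω) := lamw.prod P with hQdef
  haveI : IsFiniteMeasure Q := by rw [hQdef]; infer_instance
  set Φ : ℝ × Ω → ℝ × EuclideanSpace ℝ (Fin d) := fun p => (p.1, X p.1 p.2) with hΦdef
  have hΦ : Measurable Φ := measurable_fst.prodMk hX
  set A : ℝ × Ω → EuclideanSpace ℝ (Fin n) := fun p => α p.1 p.2 with hAdef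
  have hA : Measurable A := hα
  set κ := ProbabilityTheory.condDistrib A Φ Q with hκdef
  -- integrability of A with respect to Q
  have hQA : ∫⁻ p, ‖A p‖₊ ∂Q < ⊤ := by
    rw [hQdef, lintegral_prod _ hA.nnnorm.coe_nnreal_ennreal.aemeasurable]
    have : (fun t => ∫⁻ ω, ‖A (t, ω)‖₊ ∂P) = h := rfl
    rw [this, hlamw, lintegral_withDensity_eq_lintegral_mul lam0 hwm hhm, hlam0]
    refine weight_lintegral_lt_top _ fun t => ?_
    show w t * h t ≤ _
    rw [hwdef]
    simp only []
    rw [mul_assoc]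
    calc ((2 : ℝ≥0∞) ^ (⌈t⌉₊ + 1))⁻¹ * ((1 + h t)⁻¹ * h t)
        ≤ ((2 : ℝ≥0∞) ^ (⌈t⌉₊ + 1))⁻¹ * 1 := by
          gcongr
          rcases eq_or_ne (h t) ⊤ with hh | hh
          · simp [hh]
          · refine le_trans (mul_le_mul_right (le_add_self (a := h t) (b := 1)) _) ?_
            exact le_of_eq (ENNReal.inv_mul_cancel (fun h0 => one_ne_zero (add_eq_zero.mp h0).1) (by simp [hh]))
      _ = ((2 : ℝ≥0∞) ^ (⌈t⌉₊ + 1))⁻¹ := mul_one _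
  -- the Good set
  have hCcm : MeasurableSet Cᶜ := hC.measurableSet.compl
  set ν : Measure (ℝ × EuclideanSpace ℝ (Fin d)) := Q.map Φ with hνdef
  have hν_fst : (Q.map fun p => (Φ p, A p)).fst = ν := Measure.fst_map_prodMk hA
  have hGood1 : ∀ᵐ p ∂ν, κ p Cᶜ = 0 := by
    have hz : ∫⁻ p, κ p Cᶜ ∂ν = 0 := by
      rw [hνdef, lintegral_map (κ.measurable_coe hCcm) hΦ]
      have hkey := ProbabilityTheory.setLIntegral_preimage_condDistrib (μ := Q) hΦ hA.aemeasurable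
        hCcm (MeasurableSet.univ : MeasurableSet (univ : Set (ℝ × EuclideanSpace ℝ (Fin d))))
      rw [preimage_univ, Measure.restrict_univ, univ_inter] at hkey
      rw [← hκdef] at hkey
      rw [hkey]
      have : A ⁻¹' Cᶜ = ∅ := by
        ext p
        simp [hAdef, hαC p.1 p.2]
      simp [this]
    have := (lintegral_eq_zero_iff (κ.measurable_coe hCcm)).mp hz
    filter_upwards [this] with p hp using hp
  have hGood2 : ∀ᵐ p ∂ν, ∫⁻ y, ‖y‖₊ ∂κ p < ⊤ := by
    have hm : Measurable fun p => ∫⁻ y, ‖y‖₊ ∂κ p :=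
      Measurable.lintegral_kernel_prod_right' (κ := κ)
        (measurable_snd.nnnorm.coe_nnreal_ennreal)
    refine ae_lt_top hm ?_
    have heq : ∫⁻ p, (∫⁻ y, ‖y‖₊ ∂κ p) ∂ν = ∫⁻ q, ‖A q‖₊ ∂Q := by
      rw [← hν_fst, hκdef, ProbabilityTheory.condDistrib,
        Measure.lintegral_condKernel measurable_snd.nnnorm.coe_nnreal_ennreal,
        lintegral_map measurable_snd.nnnorm.coe_nnreal_ennreal (hΦ.prodMk hA)]
    rw [heq]
    exact hQA.ne
  set Good : Set (ℝ × EuclideanSpace ℝ (Fin d)) :=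
    {p | κ p Cᶜ = 0} ∩ {p | ∫⁻ y, ‖y‖₊ ∂κ p < ⊤} with hGoodDef
  have hGoodMeas : MeasurableSet Good := by
    refine MeasurableSet.inter ?_ ?_
    · exact κ.measurable_coe hCcm (measurableSet_singleton 0)
    · exact (Measurable.lintegral_kernel_prod_right' (κ := κ) measurable_snd.nnnorm.coe_nnreal_ennreal)
        measurableSet_Iio
  have hGoodae : ∀ᵐ p ∂ν, p ∈ Good := by
    filter_upwards [hGood1, hGood2] with p h1 h2 using ⟨h1, h2⟩
  -- the candidate function
  set a0 : ℝ × EuclideanSpace ℝ (Fin d) → EuclideanSpace ℝ (Fin n) :=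
    fun p => ∫ y, y ∂κ p with ha0def
  have ha0m : Measurable a0 := by
    have : StronglyMeasurable fun q : (ℝ × EuclideanSpace ℝ (Fin d)) × EuclideanSpace ℝ (Fin n) =>
        q.2 := measurable_snd.stronglyMeasurable
    exact (MeasureTheory.StronglyMeasurable.integral_kernel_prod_right' (κ := κ) this).measurable
  set a : ℝ × EuclideanSpace ℝ (Fin d) → EuclideanSpace ℝ (Fin n) :=
    fun p => if p ∈ Good then a0 p else c₀ with hadef
  have ham : Measurable a := Measurable.ite hGoodMeas ha0m measurable_const
  have haC : ∀ p, a p ∈ C := by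
    intro p
    rw [hadef]
    by_cases hp : p ∈ Good
    · simp only [if_pos hp]
      haveI : IsProbabilityMeasure (κ p) := by
        rw [hκdef]; infer_instance
      refine hconv.integral_mem hC ?_ ?_
      · have : (κ p) {y | ¬ y ∈ C} = 0 := hp.1
        exact ae_iff.2 this
      · exact ⟨aestronglyMeasurable_id, hp.2⟩
    · simpa only [if_neg hp] using hc₀
  refine ⟨a, ham, haC, ?_⟩
  -- countable generating π-systems
  obtain ⟨Sd, hSdc, hSdpi, hSdspan, hSdgen⟩ := exists_countable_piSystem d
  obtain ⟨Sn, hSnc, hSnpi, hSnspan, hSngen⟩ := exists_countable_piSystem n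
  have hSdm : ∀ E ∈ Sd, MeasurableSet E := fun E hE =>
    le_of_eq hSdgen _ (measurableSet_generateFrom hE)
  have hSnm : ∀ G ∈ Sn, MeasurableSet G := fun G hG =>
    le_of_eq hSngen _ (measurableSet_generateFrom hG)
  -- the key a.e. identity for a fixed pair of sets
  have hkeyEG : ∀ E, MeasurableSet E → ∀ G, MeasurableSet G →
      (fun t => ∫⁻ ω, ((Φ ⁻¹' (univ ×ˢ E)).indicator (fun r => κ (Φ r) G)) (t, ω) ∂P)
        =ᵐ[lamw]
      (fun t => ∫⁻ ω, ((Φ ⁻¹' (univ ×ˢ E) ∩ A ⁻¹' G).indicator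
          (fun _ => (1 : ℝ≥0∞))) (t, ω) ∂P) := by
    intro E hE G hG
    have hFm : Measurable ((Φ ⁻¹' (univ ×ˢ E)).indicator (fun r => κ (Φ r) G)) :=
      ((κ.measurable_coe hG).comp hΦ).indicator (hΦ (MeasurableSet.univ.prod hE))
    have hGm : Measurable ((Φ ⁻¹' (univ ×ˢ E) ∩ A ⁻¹' G).indicator
        (fun _ => (1 : ℝ≥0∞))) :=
      measurable_const.indicator ((hΦ (MeasurableSet.univ.prod hE)).inter (hA hG))
    refine ae_eq_of_forall_setLIntegral_eq_of_sigmaFinite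
      (Measurable.lintegral_prod_right' hFm) (Measurable.lintegral_prod_right' hGm) ?_
    intro T hT _
    have hTE : MeasurableSet (Φ ⁻¹' (T ×ˢ E)) := hΦ (hT.prod hE)
    have e1 : ∫⁻ t in T, (∫⁻ ω, ((Φ ⁻¹' (univ ×ˢ E)).indicator
          (fun r => κ (Φ r) G)) (t, ω) ∂P) ∂lamw
        = ∫⁻ q, (Φ ⁻¹' (T ×ˢ E)).indicator (fun r => κ (Φ r) G) q ∂Q := by
      have hFTm : Measurable ((Φ ⁻¹' (T ×ˢ E)).indicator (fun r => κ (Φ r) G)) :=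
        ((κ.measurable_coe hG).comp hΦ).indicator hTE
      rw [hQdef, lintegral_prod ((Φ ⁻¹' (T ×ˢ E)).indicator (fun r => κ (Φ r) G))
        hFTm.aemeasurable, ← lintegral_indicator hT]
      refine (lintegral_congr fun t => ?_).symm
      rcases em (t ∈ T) with ht | ht
      · rw [indicator_of_mem ht]
        exact lintegral_congr fun ω => by simp [Set.indicator_apply, hΦdef, ht]
      · rw [indicator_of_notMem ht]
        have hz : ∀ ω, (Φ ⁻¹' (T ×ˢ E)).indicator (fun r => κ (Φ r) G) (t, ω) = 0 :=
          fun ω => by simp [Set.indicator_apply, hΦdef, ht]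
        simp [hz]
    have e2 : ∫⁻ q, (Φ ⁻¹' (T ×ˢ E)).indicator (fun r => κ (Φ r) G) q ∂Q
        = Q (Φ ⁻¹' (T ×ˢ E) ∩ A ⁻¹' G) := by
      rw [lintegral_indicator hTE]
      have hk := ProbabilityTheory.setLIntegral_preimage_condDistrib (μ := Q) hΦ
        hA.aemeasurable hG (hT.prod hE)
      rw [← hκdef] at hk
      exact hk
    have e3 : Q (Φ ⁻¹' (T ×ˢ E) ∩ A ⁻¹' G)
        = ∫⁻ t in T, (∫⁻ ω, ((Φ ⁻¹' (univ ×ˢ E) ∩ A ⁻¹' G).indicator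
            (fun _ => (1 : ℝ≥0∞))) (t, ω) ∂P) ∂lamw := by
      have hGTm : Measurable ((Φ ⁻¹' (T ×ˢ E) ∩ A ⁻¹' G).indicator
          (fun _ => (1 : ℝ≥0∞))) :=
        measurable_const.indicator (hTE.inter (hA hG))
      have e3' : ∫⁻ z, (Φ ⁻¹' (T ×ˢ E) ∩ A ⁻¹' G).indicator
          (fun _ => (1 : ℝ≥0∞)) z ∂Q = Q (Φ ⁻¹' (T ×ˢ E) ∩ A ⁻¹' G) := by
        rw [lintegral_indicator (hTE.inter (hA hG))]
        exact setLIntegral_one _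
      rw [← e3', hQdef,
        lintegral_prod ((Φ ⁻¹' (T ×ˢ E) ∩ A ⁻¹' G).indicator (fun _ => (1 : ℝ≥0∞)))
        hGTm.aemeasurable, ← lintegral_indicator hT]
      refine lintegral_congr fun t => ?_
      rcases em (t ∈ T) with ht | ht
      · rw [indicator_of_mem ht]
        exact lintegral_congr fun ω => by simp [Set.indicator_apply, hΦdef, hAdef, ht]
      · rw [indicator_of_notMem ht]
        have hz : ∀ ω, (Φ ⁻¹' (T ×ˢ E) ∩ A ⁻¹' G).indicator
            (fun _ => (1 : ℝ≥0∞)) (t, ω) = 0 :=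
          fun ω => by simp [Set.indicator_apply, hΦdef, ht]
        simp [hz]
    rw [e1, e2, e3]
  have hkeyAll : ∀ᵐ t ∂lamw, ∀ q ∈ Sd ×ˢ Sn,
      (∫⁻ ω, ((Φ ⁻¹' (univ ×ˢ q.1)).indicator (fun r => κ (Φ r) q.2)) (t, ω) ∂P)
        = ∫⁻ ω, ((Φ ⁻¹' (univ ×ˢ q.1) ∩ A ⁻¹' q.2).indicator
            (fun _ => (1 : ℝ≥0∞))) (t, ω) ∂P := by
    rw [ae_ball_iff (hSdc.prod hSnc)]
    rintro ⟨E, G⟩ ⟨hE, hG⟩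
    exact hkeyEG E (hSdm E hE) G (hSnm G hG)
  have hGoodSlice : ∀ᵐ t ∂lamw, ∀ᵐ ω ∂P, (t, X t ω) ∈ Good := by
    have h1 : ∀ᵐ q ∂Q, Φ q ∈ Good := ae_of_ae_map hΦ.aemeasurable hGoodae
    rw [hQdef] at h1
    exact Measure.ae_ae_of_ae_prod h1
  -- absolute continuity of lam0 w.r.t. lamw
  have hw0 : ∀ᵐ t ∂lam0, w t ≠ 0 := by
    filter_upwards [hfin] with t ht
    refine mul_ne_zero ?_ ?_
    · exact ENNReal.inv_ne_zero.mpr (ENNReal.pow_ne_top (by simp))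
    · refine ENNReal.inv_ne_zero.mpr ?_
      exact ENNReal.add_ne_top.mpr ⟨ENNReal.one_ne_top, ht.ne⟩
  have hac : lam0 ≪ lamw := by
    refine Measure.AbsolutelyContinuous.mk fun s hs hsw => ?_
    rw [hlamw, withDensity_apply_eq_zero hwm] at hsw
    have hsub : s ⊆ ({t | w t ≠ 0} ∩ s) ∪ {t | w t = 0} := by
      intro t hts
      by_cases h0 : w t = 0
      · exact Or.inr h0
      · exact Or.inl ⟨h0, hts⟩
    refine measure_mono_null hsub (measure_union_null hsw ?_)
    rw [ae_iff] at hw0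
    simpa using hw0
  have hInt : ∀ᵐ t ∂lam0, Integrable (α t) P := by
    filter_upwards [hfin] with t ht
    exact ⟨(hαt t).aestronglyMeasurable, ht⟩
  show ∀ᵐ t ∂lam0, _
  filter_upwards [hac.ae_le hkeyAll, hac.ae_le hGoodSlice, hInt] with t hkey hGoodt hIntt
  set κt := κ.comap (fun x => (t, x)) measurable_prodMk_left with hκtdef
  haveI : ProbabilityTheory.IsMarkovKernel κt := by
    rw [hκtdef]
    exact ⟨fun x => by rw [ProbabilityTheory.Kernel.comap_apply]; infer_instance⟩
  haveI : IsProbabilityMeasure (P.map (X t)) :=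
    Measure.isProbabilityMeasure_map (hXt t).aemeasurable
  haveI : IsProbabilityMeasure (P.map (fun ω => (X t ω, α t ω))) :=
    Measure.isProbabilityMeasure_map ((hXt t).prodMk (hαt t)).aemeasurable
  have hcomp : P.map (fun ω => (X t ω, α t ω)) = (P.map (X t)) ⊗ₘ κt := by
    refine ext_of_generate_finite (image2 (· ×ˢ ·) Sd Sn) ?_
      (hSdpi.prod hSnpi) ?_ ?_
    · rw [← generateFrom_prod_eq hSdspan hSnspan, hSdgen, hSngen]
    · rintro _ ⟨E, hE, G, hG, rfl⟩
      have hEm := hSdm E hE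
      have hGm := hSnm G hG
      rw [Measure.map_apply ((hXt t).prodMk (hαt t)) (hEm.prod hGm), mk_preimage_prod,
        Measure.compProd_apply_prod hEm hGm,
        setLIntegral_map hEm (κt.measurable_coe hGm) (hXt t)]
      have hk := hkey (E, G) ⟨hE, hG⟩
      have lhs_eq : ∫⁻ ω in X t ⁻¹' E, κt (X t ω) G ∂P
          = ∫⁻ ω, ((Φ ⁻¹' (univ ×ˢ E)).indicator (fun r => κ (Φ r) G)) (t, ω) ∂P := by
        rw [← lintegral_indicator ((hXt t) hEm)]
        refine lintegral_congr fun ω => ?_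
        simp [Set.indicator_apply, hΦdef, hκtdef, ProbabilityTheory.Kernel.comap_apply]
      have rhs_eq : P (X t ⁻¹' E ∩ α t ⁻¹' G)
          = ∫⁻ ω, ((Φ ⁻¹' (univ ×ˢ E) ∩ A ⁻¹' G).indicator
              (fun _ => (1 : ℝ≥0∞))) (t, ω) ∂P := by
        have hr : ∫⁻ ω, (X t ⁻¹' E ∩ α t ⁻¹' G).indicator
            (fun _ => (1 : ℝ≥0∞)) ω ∂P = P (X t ⁻¹' E ∩ α t ⁻¹' G) := by
          rw [lintegral_indicator (((hXt t) hEm).inter ((hαt t) hGm))]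
          exact setLIntegral_one _
        rw [← hr]
        refine lintegral_congr fun ω => ?_
        simp [Set.indicator_apply, hΦdef, hAdef]
      rw [lhs_eq, rhs_eq]
      exact hk.symm
    · simp
  have huniq := ProbabilityTheory.condDistrib_ae_eq_of_measure_eq_compProd_of_measurable
    (μ := P) (hXt t) (hαt t) (κ := κt) hcomp
  have hpull : ∀ᵐ ω ∂P,
      κt (X t ω) = ProbabilityTheory.condDistrib (α t) (X t) P (X t ω) :=
    ae_of_ae_map (hXt t).aemeasurable huniq.symm
  have hce := ProbabilityTheory.condExp_ae_eq_integral_condDistrib'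
    (μ := P) (hXt t) hIntt
  refine Filter.EventuallyEq.trans ?_ hce.symm
  filter_upwards [hpull, hGoodt] with ω h1 h2
  have ha' : a (t, X t ω) = a0 (t, X t ω) := if_pos h2
  rw [ha']
  show ∫ y, y ∂κ (t, X t ω) = _
  rw [show κ (t, X t ω) = κt (X t ω) from
    (ProbabilityTheory.Kernel.comap_apply _ _ _).symm, h1]
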